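/- The set of functions f : Σ → ℂ* that admit a ℤ/2-equivariant logarithm (i.e. f = exp(g) with g ∘ c = conj(g)) is exactly the connected component of the constant function 1 in the space of ℤ/2-equivariant smooth maps from Σ to ℂ*. -/

import Mathlib

/-!
STATEMENT 0. `(S, c)` is a compact connected real curve (here modelled as a topological
space with a continuous involution `c`).  The set of ℤ/2-equivariant nonvanishing maps
`f : S → ℂ*` (modelled as continuous maps `S → ℂ` which never vanish and satisfy
`conj (f (c x)) = f x`) admitting a ℤ/2-equivariant logarithm is exactly the connected
component of the constant map `1`.
-/

private lemma re_pos_of_close {z w : ℂ} (hw : w ≠ 0) (h : ‖z - w‖ < ‖w‖) :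
    0 < (z / w).re := by
  have hwpos : 0 < ‖w‖ := norm_pos_iff.mpr hw
  have hv : ‖z / w - 1‖ < 1 := by
    rw [div_sub_one hw, norm_div, div_lt_one hwpos]
    exact h
  set v := z / w with hvdef
  have h2 : Complex.normSq (v - 1) < 1 := by
    have hsq := Complex.sq_norm (v - 1)
    nlinarith [norm_nonneg (v - 1)]
  have h3 : (v.re - 1) ^ 2 + v.im ^ 2 < 1 := by
    have := h2
    rw [Complex.normSq_apply] at this
    simpa [Complex.sub_re, Complex.sub_im, sq] using this
  nlinarith [sq_nonneg v.re, sq_nonneg v.im]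

private lemma exists_log_step {S : Type*} [TopologicalSpace S] (c : S → S)
    (f f₀ : C(S, ℂ)) (hf0 : ∀ x, f₀ x ≠ 0)
    (hfe : ∀ x, (starRingEnd ℂ) (f (c x)) = f x)
    (hf0e : ∀ x, (starRingEnd ℂ) (f₀ (c x)) = f₀ x)
    (hclose : ∀ x, ‖f x - f₀ x‖ < ‖f₀ x‖) :
    ∃ h : C(S, ℂ), (∀ x, (starRingEnd ℂ) (h (c x)) = h x) ∧
      ∀ x, Complex.exp (h x) = f x / f₀ x := by
  have hre : ∀ x, 0 < (f x / f₀ x).re := fun x => re_pos_of_close (hf0 x) (hclose x)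
  have hne : ∀ x, f x / f₀ x ≠ 0 := by
    intro x h0
    have := hre x
    rw [h0] at this
    simp at this
  have hcont : Continuous fun x => Complex.log (f x / f₀ x) := by
    refine continuous_iff_continuousAt.2 fun x => ?_
    have hdiv : Continuous fun x => f x / f₀ x := f.continuous.div f₀.continuous hf0
    exact ContinuousAt.comp (g := Complex.log) (f := fun x => f x / f₀ x)
      (continuousAt_clog (Or.inl (hre x))) hdiv.continuousAt
  refine ⟨⟨fun x => Complex.log (f x / f₀ x), hcont⟩, ?_, ?_⟩
  · intro x
    have harg : (f (c x) / f₀ (c x)).arg ≠ Real.pi := by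
      intro heq
      rw [Complex.arg_eq_pi_iff] at heq
      linarith [hre (c x), heq.1]
    show (starRingEnd ℂ) (Complex.log (f (c x) / f₀ (c x))) = Complex.log (f x / f₀ x)
    rw [← Complex.log_conj _ harg, map_div₀, hfe, hf0e]
  · intro x
    exact Complex.exp_log (hne x)

theorem stmt_0 (S : Type*) [TopologicalSpace S] [CompactSpace S] [ConnectedSpace S]
    (c : S → S) (hc : Continuous c) (hinv : Function.Involutive c) :
    {f : {f : C(S, ℂ) // (∀ x, f x ≠ 0) ∧ ∀ x, (starRingEnd ℂ) (f (c x)) = f x} |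
        ∃ g : C(S, ℂ), (∀ x, (starRingEnd ℂ) (g (c x)) = g x) ∧
          ∀ x, Complex.exp (g x) = f.1 x}
      = connectedComponent
          ⟨ContinuousMap.const S 1, fun _ => one_ne_zero, fun _ => by simp⟩ := by
  set e : {f : C(S, ℂ) // (∀ x, f x ≠ 0) ∧ ∀ x, (starRingEnd ℂ) (f (c x)) = f x} :=
    ⟨ContinuousMap.const S 1, fun _ => one_ne_zero, fun _ => by simp⟩ with he_def
  set L := {f : {f : C(S, ℂ) // (∀ x, f x ≠ 0) ∧ ∀ x, (starRingEnd ℂ) (f (c x)) = f x} |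
        ∃ g : C(S, ℂ), (∀ x, (starRingEnd ℂ) (g (c x)) = g x) ∧
          ∀ x, Complex.exp (g x) = f.1 x} with hL_def
  have heL : e ∈ L := by
    refine ⟨0, fun x => by simp, fun x => by simp [he_def]⟩
  apply subset_antisymm
  · -- L ⊆ connectedComponent e : use the path t ↦ exp (t • g)
    rintro f ⟨g, hge, hgx⟩
    have hFcont : Continuous fun p : ℝ × S => Complex.exp ((p.1 : ℂ) * g p.2) := by
      apply Complex.continuous_exp.comp
      exact (Complex.continuous_ofReal.comp continuous_fst).mul (g.continuous.comp continuous_snd)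
    set γ : C(ℝ, C(S, ℂ)) := ContinuousMap.curry ⟨_, hFcont⟩ with hγ_def
    have hγ_app : ∀ (t : ℝ) (x : S), γ t x = Complex.exp ((t : ℂ) * g x) := fun t x => rfl
    have prop : ∀ t : ℝ, (∀ x, γ t x ≠ 0) ∧
        ∀ x, (starRingEnd ℂ) (γ t (c x)) = γ t x := by
      intro t
      refine ⟨fun x => by rw [hγ_app]; exact Complex.exp_ne_zero _, fun x => ?_⟩
      rw [hγ_app, hγ_app, ← Complex.exp_conj, map_mul, Complex.conj_ofReal, hge]
    set Γ : ℝ → {f : C(S, ℂ) // (∀ x, f x ≠ 0) ∧ ∀ x, (starRingEnd ℂ) (f (c x)) = f x} :=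
      fun t => ⟨γ t, prop t⟩ with hΓ_def
    have hΓcont : Continuous Γ := Continuous.subtype_mk γ.continuous _
    have h0 : Γ 0 = e := by
      apply Subtype.ext
      ext x
      rw [hΓ_def]
      show γ 0 x = 1
      rw [hγ_app]
      simp
    have h1 : Γ 1 = f := by
      apply Subtype.ext
      ext x
      rw [hΓ_def]
      show γ 1 x = f.1 x
      rw [hγ_app]
      simpa using hgx x
    have : Joined e f := by
      refine ⟨{ toFun := fun t => Γ t
                continuous_toFun := hΓcont.comp continuous_subtype_val
                source' := h0
                target' := h1 }⟩
    exact pathComponent_subset_component e this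
  · -- connectedComponent e ⊆ L : L is clopen
    have key : ∀ f f₀ : {f : C(S, ℂ) // (∀ x, f x ≠ 0) ∧
        ∀ x, (starRingEnd ℂ) (f (c x)) = f x},
        (∀ x, ‖f.1 x - f₀.1 x‖ < ‖f₀.1 x‖) → (f ∈ L ↔ f₀ ∈ L) := by
      intro f f₀ hclose
      obtain ⟨h, hhe, hhx⟩ := exists_log_step c f.1 f₀.1 f₀.2.1 f.2.2 f₀.2.2 hclose
      constructor
      · rintro ⟨g, hge, hgx⟩
        refine ⟨g - h, fun x => ?_, fun x => ?_⟩
        · rw [ContinuousMap.sub_apply, ContinuousMap.sub_apply, map_sub, hge, hhe]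
        · rw [ContinuousMap.sub_apply, Complex.exp_sub, hgx, hhx]
          field_simp
          exact mul_div_cancel_left₀ _ (f.2.1 x)
      · rintro ⟨g₀, hg0e, hg0x⟩
        refine ⟨g₀ + h, fun x => ?_, fun x => ?_⟩
        · rw [ContinuousMap.add_apply, ContinuousMap.add_apply, map_add, hg0e, hhe]
        · rw [ContinuousMap.add_apply, Complex.exp_add, hg0x, hhx, mul_comm,
            div_mul_cancel₀ _ (f₀.2.1 x)]
    have eps : ∀ f₀ : {f : C(S, ℂ) // (∀ x, f x ≠ 0) ∧
        ∀ x, (starRingEnd ℂ) (f (c x)) = f x}, ∃ ε > 0,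
        ∀ f : {f : C(S, ℂ) // (∀ x, f x ≠ 0) ∧ ∀ x, (starRingEnd ℂ) (f (c x)) = f x},
          dist f f₀ < ε → ∀ x, ‖f.1 x - f₀.1 x‖ < ‖f₀.1 x‖ := by
      intro f₀
      obtain ⟨x₀, -, hx₀⟩ := isCompact_univ.exists_isMinOn Set.univ_nonempty
        ((continuous_norm.comp f₀.1.continuous).continuousOn)
      refine ⟨‖f₀.1 x₀‖, norm_pos_iff.mpr (f₀.2.1 x₀), ?_⟩
      intro f hdist x
      rw [Subtype.dist_eq] at hdist
      have h1 : dist (f.1 x) (f₀.1 x) ≤ dist f.1 f₀.1 := ContinuousMap.dist_apply_le_dist x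
      have h2 := lt_of_le_of_lt h1 hdist
      rw [Complex.dist_eq] at h2
      exact h2.trans_le (isMinOn_iff.1 hx₀ x (Set.mem_univ x))
    have hopen : IsOpen L := by
      rw [Metric.isOpen_iff]
      intro f₀ hf₀
      obtain ⟨ε, hε, hball⟩ := eps f₀
      exact ⟨ε, hε, fun f hf => (key f f₀ (hball f (Metric.mem_ball.1 hf))).2 hf₀⟩
    have hclosed : IsClosed L := by
      rw [← isOpen_compl_iff, Metric.isOpen_iff]
      intro f₀ hf₀
      obtain ⟨ε, hε, hball⟩ := eps f₀
      exact ⟨ε, hε, fun f hf hfL => hf₀ ((key f f₀ (hball f (Metric.mem_ball.1 hf))).1 hfL)⟩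
    exact IsClopen.connectedComponent_subset ⟨hclosed, hopen⟩ heL
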